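/- Let k_x ∈ ℂ, let k_y, k_y' ∈ ℂ (the vertical wavenumbers of two adjacent layers), let ν > 0 be real, let d, d' ∈ ℝ (the interface heights, with the lower interface at depth d'), let A ∈ ℂ (the amplitude in the upper layer), and let R̃' ∈ ℂ (the generalized reflection coefficient of the lower layer). Define R = (k_y − ν k_y')/(k_y + ν k_y'), T = 2k_y/(k_y + ν k_y'), R' = (k_y' − k_y/ν)/(k_y' + k_y/ν), T' = 2k_y'/(k_y' + k_y/ν), E = e^{2 i k_y'(d'−d)}, the generalized reflection coefficient R̃ = R + T'·R̃'·T·E/(1 − R'·R̃'·E), and the lower-layer amplitude A' = T·A·e^{i(k_y − k_y')d}/(1 − R'·R̃'·E). Assume k_y + ν k_y' ≠ 0, k_y' + k_y/ν ≠ 0 and 1 − R'·R̃'·E ≠ 0. Define u(x,y) = A·e^{i k_x x}(e^{−i k_y y} + R̃·e^{i k_y(y+2d)}) and u'(x,y) = A'·e^{i k_x x}(e^{−i k_y' y} + R̃'·e^{i k_y'(y+2d')}). Then for every x ∈ ℝ one has u(x,−d) = u'(x,−d) and ∂u/∂y(x,−d) = ν·∂u'/∂y(x,−d). -/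

import Mathlib

/-- Transmission conditions on the flat interface `y = -d` between two adjacent planar
layers, satisfied by the closed-form planar layered-medium solution with amplitudes and
generalized reflection coefficients given by the recursions (4)-(5) of the paper. -/
theorem stmt1 (kx ky ky' : ℂ) (ν : ℝ) (hν : 0 < ν) (d d' : ℝ) (A Rgen' : ℂ)
    (R T R' T' E Rgen A' : ℂ)
    (hR : R = (ky - (ν : ℂ) * ky') / (ky + (ν : ℂ) * ky'))
    (hT : T = 2 * ky / (ky + (ν : ℂ) * ky'))
    (hR' : R' = (ky' - ky / (ν : ℂ)) / (ky' + ky / (ν : ℂ)))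
    (hT' : T' = 2 * ky' / (ky' + ky / (ν : ℂ)))
    (hE : E = Complex.exp (2 * Complex.I * ky' * ((d' : ℂ) - (d : ℂ))))
    (hRgen : Rgen = R + T' * Rgen' * T * E / (1 - R' * Rgen' * E))
    (hA' : A' = T * A * Complex.exp (Complex.I * (ky - ky') * (d : ℂ)) / (1 - R' * Rgen' * E))
    (h1 : ky + (ν : ℂ) * ky' ≠ 0) (h2 : ky' + ky / (ν : ℂ) ≠ 0)
    (h3 : 1 - R' * Rgen' * E ≠ 0)
    (u u' : ℝ → ℝ → ℂ)
    (hu : ∀ x y : ℝ, u x y = A * Complex.exp (Complex.I * kx * (x : ℂ)) *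
      (Complex.exp (-Complex.I * ky * (y : ℂ)) +
        Rgen * Complex.exp (Complex.I * ky * ((y : ℂ) + 2 * (d : ℂ)))))
    (hu' : ∀ x y : ℝ, u' x y = A' * Complex.exp (Complex.I * kx * (x : ℂ)) *
      (Complex.exp (-Complex.I * ky' * (y : ℂ)) +
        Rgen' * Complex.exp (Complex.I * ky' * ((y : ℂ) + 2 * (d' : ℂ))))) :
    ∀ x : ℝ, u x (-d) = u' x (-d) ∧
      deriv (fun y : ℝ => u x y) (-d) = (ν : ℂ) * deriv (fun y : ℝ => u' x y) (-d) := by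
  intro x
  have hν0 : (ν : ℂ) ≠ 0 := by exact_mod_cast hν.ne'
  set X := Complex.exp (Complex.I * kx * (x : ℂ)) with hX
  set P := Complex.exp (Complex.I * ky * (d : ℂ)) with hP
  set Q := Complex.exp (Complex.I * ky' * (d : ℂ)) with hQ
  set W := Complex.exp (Complex.I * ky' * (2 * (d' : ℂ) - (d : ℂ))) with hW
  have hQ0 : Q ≠ 0 := Complex.exp_ne_zero _
  have hEQ : W = E * Q := by rw [hE, hW, hQ, ← Complex.exp_add]; ring_nf
  have hPQ : Complex.exp (Complex.I * (ky - ky') * (d : ℂ)) * Q = P := by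
    rw [hP, hQ, ← Complex.exp_add]; ring_nf
  -- exponent simplifications at y = -d
  have e1 : Complex.exp (-Complex.I * ky * ((-d : ℝ) : ℂ)) = P := by
    rw [hP]; congr 1; push_cast; ring
  have e2 : Complex.exp (Complex.I * ky * (((-d : ℝ) : ℂ) + 2 * (d : ℂ))) = P := by
    rw [hP]; congr 1; push_cast; ring
  have e3 : Complex.exp (-Complex.I * ky' * ((-d : ℝ) : ℂ)) = Q := by
    rw [hQ]; congr 1; push_cast; ring
  have e4 : Complex.exp (Complex.I * ky' * (((-d : ℝ) : ℂ) + 2 * (d' : ℂ))) = W := by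
    rw [hW]; congr 1; push_cast; ring
  have h2' : ky' * (ν:ℂ) + ky ≠ 0 := by
    intro h; apply h1; linear_combination h
  have h2'' : (ν:ℂ) * ky' + ky ≠ 0 := by
    intro h; apply h1; linear_combination h
  -- scalar identities
  have hb : ky' + ky / (ν : ℂ) = (ky + (ν : ℂ) * ky') / (ν : ℂ) := by
    field_simp; ring
  have id1 : (1 - R' * Rgen' * E) * (1 + R) + T * T' * Rgen' * E = T * (1 + Rgen' * E) := by
    have hR'2 : R' = ((ν : ℂ) * ky' - ky) / (ky + (ν : ℂ) * ky') := by
      rw [hR', hb, div_div_eq_mul_div, sub_mul, div_mul_cancel₀ _ hν0, mul_comm ky']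
    have hT'2 : T' = 2 * (ν : ℂ) * ky' / (ky + (ν : ℂ) * ky') := by
      rw [hT', hb, div_div_eq_mul_div]; ring
    have h1R : 1 + R = T := by
      rw [hR, hT, eq_div_iff h1, add_mul, div_mul_cancel₀ _ h1]; ring
    have hTR : T' - R' = 1 := by
      rw [hR'2, hT'2, ← sub_div, div_eq_one_iff_eq h1]; ring
    linear_combination (1 - R' * Rgen' * E) * h1R + T * Rgen' * E * hTR
  have id2 : ky * ((R - 1) * (1 - R' * Rgen' * E) + T * T' * Rgen' * E)
      = (ν : ℂ) * ky' * T * (Rgen' * E - 1) := by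
    rw [hR, hT, hR', hT', hb]; field_simp; ring
  have hA'D : A' * (1 - R' * Rgen' * E) = T * A * Complex.exp (Complex.I * (ky - ky') * (d : ℂ)) := by
    rw [hA', div_mul_cancel₀ _ h3]
  have hRgenD : Rgen * (1 - R' * Rgen' * E) = R * (1 - R' * Rgen' * E) + T' * Rgen' * T * E := by
    rw [hRgen, add_mul, div_mul_cancel₀ _ h3]
  -- value match
  have goal1 : u x (-d) = u' x (-d) := by
    rw [hu, hu', e1, e2, e3, e4]
    have key : A * (P + Rgen * P) * (1 - R' * Rgen' * E)
        = A' * (Q + Rgen' * W) * (1 - R' * Rgen' * E) := by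
      rw [hEQ]
      linear_combination A * P * id1 + A * P * hRgenD - (Q + Rgen' * (E * Q)) * hA'D
        - T * A * (1 + Rgen' * E) * hPQ
    have := mul_right_cancel₀ h3 key
    linear_combination X * this
  refine ⟨goal1, ?_⟩
  -- derivatives
  have hdu : HasDerivAt (fun y : ℝ => u x y)
      (A * X * (-Complex.I * ky * P + Rgen * (Complex.I * ky * P))) (-d) := by
    have f1 : HasDerivAt (fun y : ℝ => Complex.exp (-Complex.I * ky * (y : ℂ)))
        (-Complex.I * ky * Complex.exp (-Complex.I * ky * ((-d : ℝ) : ℂ))) (-d) := by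
      have h := ((Complex.ofRealCLM.hasDerivAt (x := (-d : ℝ))).const_mul (-Complex.I * ky))
      simpa [mul_comm] using h.cexp
    have f2 : HasDerivAt (fun y : ℝ => Complex.exp (Complex.I * ky * ((y : ℂ) + 2 * (d : ℂ))))
        (Complex.I * ky * Complex.exp (Complex.I * ky * (((-d : ℝ) : ℂ) + 2 * (d : ℂ)))) (-d) := by
      have h : HasDerivAt (fun y : ℝ => Complex.I * ky * ((y : ℂ) + 2 * (d : ℂ)))
          (Complex.I * ky) (-d) := by
        simpa [mul_add] using
          (((Complex.ofRealCLM.hasDerivAt (x := (-d : ℝ))).add_const (2 * (d:ℂ))).const_mul (Complex.I * ky))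
      simpa [mul_comm] using h.cexp
    have := ((f1.add (f2.const_mul Rgen)).const_mul (A * X))
    rw [e1, e2] at this
    refine HasDerivAt.congr_of_eventuallyEq this ?_
    filter_upwards with y
    rw [hu]; rfl
  have hdu' : HasDerivAt (fun y : ℝ => u' x y)
      (A' * X * (-Complex.I * ky' * Q + Rgen' * (Complex.I * ky' * W))) (-d) := by
    have f1 : HasDerivAt (fun y : ℝ => Complex.exp (-Complex.I * ky' * (y : ℂ)))
        (-Complex.I * ky' * Complex.exp (-Complex.I * ky' * ((-d : ℝ) : ℂ))) (-d) := by
      have h := ((Complex.ofRealCLM.hasDerivAt (x := (-d : ℝ))).const_mul (-Complex.I * ky'))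
      simpa [mul_comm] using h.cexp
    have f2 : HasDerivAt (fun y : ℝ => Complex.exp (Complex.I * ky' * ((y : ℂ) + 2 * (d' : ℂ))))
        (Complex.I * ky' * Complex.exp (Complex.I * ky' * (((-d : ℝ) : ℂ) + 2 * (d' : ℂ)))) (-d) := by
      have h : HasDerivAt (fun y : ℝ => Complex.I * ky' * ((y : ℂ) + 2 * (d' : ℂ)))
          (Complex.I * ky') (-d) := by
        simpa [mul_add] using
          (((Complex.ofRealCLM.hasDerivAt (x := (-d : ℝ))).add_const (2 * (d':ℂ))).const_mul (Complex.I * ky'))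
      simpa [mul_comm] using h.cexp
    have := ((f1.add (f2.const_mul Rgen')).const_mul (A' * X))
    rw [e3, e4] at this
    refine HasDerivAt.congr_of_eventuallyEq this ?_
    filter_upwards with y
    rw [hu']; rfl
  rw [hdu.deriv, hdu'.deriv]
  have key2 : A * (-Complex.I * ky * P + Rgen * (Complex.I * ky * P)) * (1 - R' * Rgen' * E)
      = (ν : ℂ) * (A' * (-Complex.I * ky' * Q + Rgen' * (Complex.I * ky' * W))) * (1 - R' * Rgen' * E) := by
    rw [hEQ]
    linear_combination A * Complex.I * P * id2 + A * Complex.I * ky * P * hRgenD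
      - (ν:ℂ) * Complex.I * ky' * (Rgen' * E - 1) * Q * hA'D
      - (ν:ℂ) * T * A * Complex.I * ky' * (Rgen' * E - 1) * hPQ
  have := mul_right_cancel₀ h3 key2
  linear_combination X * this
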